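/- Let θ₀ ∈ (0, π/2), ρ > 0, and q = (q₁, q₂)ᵀ ∈ ℝ² with q₁ > 0, q₂ > 0 and M₁⁺(θ₀)q = ρq. Define vectors u_j ∈ ℝ^{2^j} recursively by u₁ = q and u_{j+1} = (q₁ u_j, q₂ u_j)ᵀ (concatenation of the two scaled copies). Then for every j ≥ 1, ⟨u_j, |M_j(θ₀)| u_j⟩ ≥ ρ^j ‖u_j‖², where |M_j(θ₀)| is the entrywise absolute value of M_j(θ₀) and ‖·‖, ⟨·,·⟩ are the Euclidean norm and inner product on ℝ^{2^j}. -/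

import Mathlib

/-- The equivalence `Fin 2^j ⊕ Fin 2^j ≃ Fin 2^(j+1)` used to assemble block matrices. -/
def pe (j : ℕ) : Fin (2 ^ j) ⊕ Fin (2 ^ j) ≃ Fin (2 ^ (j + 1)) :=
  finSumFinEquiv.trans (finCongr (by rw [pow_succ, mul_two] : (2 : ℕ) ^ (j + 1) = 2 ^ j + 2 ^ j).symm)

/-- The matrices `M_j(θ)`: `M_1(θ) = [[cos θ, sin θ], [sin θ, −cos θ]]` and
`M_{j+1}(θ)` is built from `M_j(θ)` in 2×2 block form. (`M_0` is a dummy value;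
all statements concern `j ≥ 1`.) -/
noncomputable def Mmat (θ : ℝ) : (j : ℕ) → Matrix (Fin (2 ^ j)) (Fin (2 ^ j)) ℝ
  | 0 => 1
  | 1 => Matrix.of ![![Real.cos θ, Real.sin θ], ![Real.sin θ, -Real.cos θ]]
  | (j + 2) => Matrix.reindex (pe (j + 1)) (pe (j + 1))
      (Matrix.fromBlocks
        (Real.cos θ • Mmat θ (j + 1)) (Real.sin θ • Mmat θ (j + 1))
        (Real.sin θ • Mmat θ (j + 1)) ((-Real.cos θ) • Mmat θ (j + 1)))
/-- The test vectors `u_j ∈ ℝ^{2^j}`: `u₁ = q` and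
`u_{j+1} = (q₁ u_j, q₂ u_j)ᵀ` (concatenation). (`j = 0` is a dummy value.) -/
noncomputable def uvec (q : Fin 2 → ℝ) : (j : ℕ) → Fin (2 ^ j) → ℝ
  | 0 => fun _ => 1
  | 1 => fun i => q (finCongr (by norm_num : (2 : ℕ) ^ 1 = 2) i)
  | (j + 2) => fun i =>
      Sum.elim (fun k => q 0 * uvec q (j + 1) k) (fun k => q 1 * uvec q (j + 1) k)
        ((pe (j + 1)).symm i)

lemma quad_eq (n : ℕ) (M : Matrix (Fin n) (Fin n) ℝ) (u : Fin n → ℝ) :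
    ∑ i, u i * (M.map (fun t => |t|)).mulVec u i = ∑ i, ∑ l, u i * |M i l| * u l := by
  simp [Matrix.mulVec, dotProduct, Finset.mul_sum, Matrix.map_apply, mul_assoc]

lemma block_quad {m n : ℕ} (e : Fin m ⊕ Fin m ≃ Fin n)
    (A B C D : Matrix (Fin m) (Fin m) ℝ) (x y : Fin m → ℝ)
    (v : Fin n → ℝ) (M : Matrix (Fin n) (Fin n) ℝ)
    (hv : ∀ z, v (e z) = Sum.elim x y z)
    (hM : ∀ z w, M (e z) (e w) = Matrix.fromBlocks A B C D z w) :
    ∑ i, ∑ l, v i * M i l * v l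
      = (∑ i, ∑ l, x i * A i l * x l) + (∑ i, ∑ l, x i * B i l * y l)
        + (∑ i, ∑ l, y i * C i l * x l) + (∑ i, ∑ l, y i * D i l * y l) := by
  rw [← Equiv.sum_comp e (fun i => ∑ l, v i * M i l * v l)]
  have h1 : ∀ z, (∑ l, v (e z) * M (e z) l * v l)
      = ∑ w, v (e z) * M (e z) (e w) * v (e w) := fun z => (Equiv.sum_comp e _).symm
  simp_rw [h1, hv, hM]
  rw [Fintype.sum_sum_type]
  simp [Fintype.sum_sum_type, Finset.sum_add_distrib]
  ring

lemma pull {m : ℕ} (N : Matrix (Fin m) (Fin m) ℝ) (u : Fin m → ℝ) (a b d : ℝ) :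
    (∑ i, ∑ l, (a * u i) * (d * N i l) * (b * u l)) = a * b * d * ∑ i, ∑ l, u i * N i l * u l := by
  rw [Finset.mul_sum]
  refine Finset.sum_congr rfl fun i _ => ?_
  rw [Finset.mul_sum]
  exact Finset.sum_congr rfl fun l _ => by ring


set_option maxHeartbeats 1000000 in
/-- If `q` has strictly positive entries and is an eigenvector of
`M₁⁺(θ₀) = [[cos θ₀, sin θ₀], [sin θ₀, 0]]` with eigenvalue `ρ > 0`, then for every
`j ≥ 1`, `⟨u_j, |M_j(θ₀)| u_j⟩ ≥ ρ^j ‖u_j‖²` (Euclidean inner product and norm). -/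
theorem stmt12 (θ₀ ρ : ℝ) (hθ0 : 0 < θ₀) (hθ1 : θ₀ < Real.pi / 2) (hρ : 0 < ρ)
    (q : Fin 2 → ℝ) (hq0 : 0 < q 0) (hq1 : 0 < q 1)
    (heig : (Matrix.of ![![Real.cos θ₀, Real.sin θ₀], ![Real.sin θ₀, 0]]).mulVec q
      = ρ • q)
    (j : ℕ) (hj : 1 ≤ j) :
    ρ ^ j * ∑ i, (uvec q j i) ^ 2
      ≤ ∑ i, uvec q j i * ((Mmat θ₀ j).map (fun t => |t|)).mulVec (uvec q j) i := by
  have hpi := Real.pi_pos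
  have hc : 0 < Real.cos θ₀ := Real.cos_pos_of_mem_Ioo ⟨by linarith, hθ1⟩
  have hs : 0 < Real.sin θ₀ := Real.sin_pos_of_pos_of_lt_pi hθ0 (by linarith)
  have h0 := congrFun heig 0
  have h1 := congrFun heig 1
  simp [Matrix.mulVec, dotProduct, Fin.sum_univ_two] at h0 h1
  induction j, hj using Nat.le_induction with
  | base =>
    rw [quad_eq]
    show ρ ^ 1 * ∑ i : Fin 2, (q i) ^ 2 ≤ ∑ i : Fin 2, ∑ l : Fin 2, q i * |(Mmat θ₀ 1) i l| * q l
    simp [Fin.sum_univ_two, Mmat, abs_of_pos hc, abs_of_pos hs]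
    nlinarith [sq_nonneg (q 0), sq_nonneg (q 1)]
  | succ k hk IH =>
    obtain ⟨n, rfl⟩ : ∃ n, k = n + 1 := ⟨k - 1, by omega⟩
    rw [quad_eq] at IH ⊢
    set c := Real.cos θ₀ with hcdef
    set s := Real.sin θ₀ with hsdef
    set N := Mmat θ₀ (n + 1) with hN
    set u := uvec q (n + 1) with hu
    set v := uvec q (n + 2) with hv
    set e := pe (n + 1) with he
    have hvz : ∀ z, v (e z) = Sum.elim (fun i => q 0 * u i) (fun i => q 1 * u i) z := by
      intro z
      show uvec q (n + 2) (e z) = _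
      simp [uvec, he, Equiv.symm_apply_apply]
      rfl
    have hMz : ∀ z w, ((Mmat θ₀ (n + 2)).map (fun t => |t|)) (e z) (e w)
        = Matrix.fromBlocks
            (Matrix.of fun i l => c * |N i l|) (Matrix.of fun i l => s * |N i l|)
            (Matrix.of fun i l => s * |N i l|) (Matrix.of fun i l => c * |N i l|) z w := by
      intro z w
      have hm : Mmat θ₀ (n + 2) (e z) (e w)
          = Matrix.fromBlocks (c • N) (s • N) (s • N) ((-c) • N) z w := by
        simp [Mmat, he, Matrix.reindex_apply, Matrix.submatrix_apply, Equiv.symm_apply_apply]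
        rfl
      rw [Matrix.map_apply, hm]
      rcases z with z | z <;> rcases w with w | w <;>
        simp [Matrix.fromBlocks, abs_mul, abs_of_pos hc, abs_of_pos hs]
    have key : ∑ i, ∑ l, v i * |Mmat θ₀ (n + 2) i l| * v l
        = (q 0 * q 0 * c + q 0 * q 1 * s + q 1 * q 0 * s + q 1 * q 1 * c)
            * ∑ i, ∑ l, u i * |N i l| * u l := by
      have hb := block_quad e
        (Matrix.of fun i l => c * |N i l|) (Matrix.of fun i l => s * |N i l|)
        (Matrix.of fun i l => s * |N i l|) (Matrix.of fun i l => c * |N i l|)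
        (fun i => q 0 * u i) (fun i => q 1 * u i) v
        ((Mmat θ₀ (n + 2)).map (fun t => |t|)) hvz hMz
      have habs : ∀ i l, ((Mmat θ₀ (n + 2)).map (fun t => |t|)) i l = |Mmat θ₀ (n + 2) i l| :=
        fun i l => rfl
      simp only [habs] at hb
      rw [hb]
      simp only [Matrix.of_apply]
      have hp : ∀ a b d : ℝ, (∑ i, ∑ l, (a * u i) * (d * |N i l|) * (b * u l))
          = a * b * d * ∑ i, ∑ l, u i * |N i l| * u l :=
        fun a b d => pull (fun i l => |N i l|) u a b d
      rw [hp, hp, hp, hp]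
      ring
    have keyT : ∑ i, (v i) ^ 2 = ((q 0) ^ 2 + (q 1) ^ 2) * ∑ i, (u i) ^ 2 := by
      rw [← Equiv.sum_comp e (fun i => (v i) ^ 2)]
      simp_rw [hvz]
      rw [Fintype.sum_sum_type]
      simp only [Sum.elim_inl, Sum.elim_inr, mul_pow]
      rw [← Finset.mul_sum, ← Finset.mul_sum]
      ring
    rw [key, keyT]
    set S := ∑ i, ∑ l, u i * |N i l| * u l with hS
    set T := ∑ i, (u i) ^ 2 with hT
    have hT0 : 0 ≤ T := Finset.sum_nonneg fun i _ => sq_nonneg _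
    have hS0 : ρ ^ (n + 1) * T ≤ S := IH
    have hpow : 0 < ρ ^ (n + 1) := pow_pos hρ _
    have hS0' : 0 ≤ S := le_trans (by positivity) hS0
    have hrs : ρ * ((q 0) ^ 2 + (q 1) ^ 2) = c * (q 0) ^ 2 + 2 * s * (q 0 * q 1) := by
      nlinarith [h0, h1]
    have hcoef : 0 ≤ c * (q 0) ^ 2 + 2 * s * (q 0 * q 1) := by positivity
    calc ρ ^ (n + 1 + 1) * (((q 0) ^ 2 + (q 1) ^ 2) * T)
        = (c * (q 0) ^ 2 + 2 * s * (q 0 * q 1)) * (ρ ^ (n + 1) * T) := by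
          rw [pow_succ]; rw [← hrs]; ring
      _ ≤ (c * (q 0) ^ 2 + 2 * s * (q 0 * q 1)) * S := by
          exact mul_le_mul_of_nonneg_left hS0 hcoef
      _ ≤ (q 0 * q 0 * c + q 0 * q 1 * s + q 1 * q 0 * s + q 1 * q 1 * c) * S := by
          apply mul_le_mul_of_nonneg_right _ hS0'
          nlinarith [sq_nonneg (q 1)]
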